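/- For all β ≥ 0 and π ∈ (0,1], Δ(β, π) = (1+3β+β²)/(2(1+β)) + (1+β)(1-π)/π + 1/2 ≥ 1/π, with equality if and only if β = 0. -/
import Mathlib


theorem aoi_floor (β π : ℝ) (hβ : 0 ≤ β) (hπ0 : 0 < π) (hπ1 : π ≤ 1) :
    1 / π ≤ (1 + 3 * β + β ^ 2) / (2 * (1 + β)) + (1 + β) * (1 - π) / π + 1 / 2 ∧
    ((1 + 3 * β + β ^ 2) / (2 * (1 + β)) + (1 + β) * (1 - π) / π + 1 / 2 = 1 / π ↔ β = 0) := by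
  have hb : (0:ℝ) < 1 + β := by linarith
  have key : (1 + 3 * β + β ^ 2) / (2 * (1 + β)) + (1 + β) * (1 - π) / π + 1 / 2 - 1 / π
      = β * (2 + β) / (2 * (1 + β)) + β * (1 - π) / π := by
    field_simp
    ring
  constructor
  · nlinarith [mul_nonneg (mul_nonneg hβ (by linarith : (0:ℝ) ≤ 2 + β)) (le_of_lt (inv_pos.2 (by positivity : (0:ℝ) < 2 * (1 + β)))),
      mul_nonneg (mul_nonneg hβ (by linarith : (0:ℝ) ≤ 1 - π)) (le_of_lt (inv_pos.2 hπ0)),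
      key, div_nonneg (mul_nonneg hβ (by linarith : (0:ℝ) ≤ 2 + β)) (by positivity : (0:ℝ) ≤ 2 * (1 + β)),
      div_nonneg (mul_nonneg hβ (by linarith : (0:ℝ) ≤ 1 - π)) (le_of_lt hπ0)]
  · constructor
    · intro h
      by_contra hb0
      have hβpos : 0 < β := lt_of_le_of_ne hβ (Ne.symm hb0)
      have h1 : 0 < β * (2 + β) / (2 * (1 + β)) := by positivity
      have h2 : 0 ≤ β * (1 - π) / π := div_nonneg (mul_nonneg hβ (by linarith)) hπ0.le
      nlinarith [key]
    · intro h; subst h; field_simp; ring
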